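/- The increase in optimal growth due to causal side information in a horse race equals directed information: W*(X^n||Y^n) − W*(X^n) = I(Y^n → X^n), where W*(X^n||Y^n) is the maximal expected log-wealth with causal side information and W*(X^n) without side information. -/

import Mathlib

open scoped Classical
open Real

noncomputable section

variable {α β : Type} [Fintype α] [DecidableEq α] [Fintype β] [DecidableEq β]

/-- Probability of the event `E` under the joint pmf `p` of `(X^n, Y^n)`. -/
def pr {n : ℕ} (p : (Fin n → α) → (Fin n → β) → ℝ)
    (E : (Fin n → α) → (Fin n → β) → Prop) : ℝ :=
  ∑ x, ∑ y, if E x y then p x y else 0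

/-- `p` is a probability mass function on pairs of sequences. -/
def IsPmf {n : ℕ} (p : (Fin n → α) → (Fin n → β) → ℝ) : Prop :=
  (∀ x y, 0 ≤ p x y) ∧ ∑ x, ∑ y, p x y = 1

/-- The conditional pmf `p(x_i | x^{i-1}, y^{i-d})` evaluated along `(x, y)`. -/
def condX {n : ℕ} (p : (Fin n → α) → (Fin n → β) → ℝ) (d : ℕ) (i : Fin n)
    (x : Fin n → α) (y : Fin n → β) : ℝ :=
  pr p (fun x' y' => (∀ j, j < i → x' j = x j) ∧ x' i = x i ∧
      ∀ j : Fin n, (j : ℕ) + d ≤ (i : ℕ) → y' j = y j) /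
  pr p (fun x' y' => (∀ j, j < i → x' j = x j) ∧
      ∀ j : Fin n, (j : ℕ) + d ≤ (i : ℕ) → y' j = y j)

/-- The conditional pmf `p(y_i | y^{i-1}, x^{i-d})` evaluated along `(x, y)`. -/
def condY {n : ℕ} (p : (Fin n → α) → (Fin n → β) → ℝ) (d : ℕ) (i : Fin n)
    (x : Fin n → α) (y : Fin n → β) : ℝ :=
  pr p (fun x' y' => (∀ j, j < i → y' j = y j) ∧ y' i = y i ∧
      ∀ j : Fin n, (j : ℕ) + d ≤ (i : ℕ) → x' j = x j) /
  pr p (fun x' y' => (∀ j, j < i → y' j = y j) ∧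
      ∀ j : Fin n, (j : ℕ) + d ≤ (i : ℕ) → x' j = x j)

/-- Causally conditioned pmf `p(x^n || y^{n-d}) = ∏ᵢ p(xᵢ | x^{i-1}, y^{i-d})`. -/
def ccX {n : ℕ} (p : (Fin n → α) → (Fin n → β) → ℝ) (d : ℕ)
    (x : Fin n → α) (y : Fin n → β) : ℝ :=
  ∏ i, condX p d i x y

/-- Causally conditioned pmf `p(y^n || x^{n-d}) = ∏ᵢ p(yᵢ | y^{i-1}, x^{i-d})`. -/
def ccY {n : ℕ} (p : (Fin n → α) → (Fin n → β) → ℝ) (d : ℕ)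
    (x : Fin n → α) (y : Fin n → β) : ℝ :=
  ∏ i, condY p d i x y

/-- Marginal pmf of `X^n`. -/
def pX {n : ℕ} (p : (Fin n → α) → (Fin n → β) → ℝ) (x : Fin n → α) : ℝ := ∑ y, p x y

/-- Marginal pmf of `Y^n`. -/
def pY {n : ℕ} (p : (Fin n → α) → (Fin n → β) → ℝ) (y : Fin n → β) : ℝ := ∑ x, p x y

/-- `H(X^n)` in bits. -/
def HX {n : ℕ} (p : (Fin n → α) → (Fin n → β) → ℝ) : ℝ :=
  -(∑ x, ∑ y, p x y * Real.logb 2 (pX p x))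

/-- `H(Y^n)` in bits. -/
def HY {n : ℕ} (p : (Fin n → α) → (Fin n → β) → ℝ) : ℝ :=
  -(∑ x, ∑ y, p x y * Real.logb 2 (pY p y))

/-- Joint entropy `H(X^n, Y^n)` in bits. -/
def Hjoint {n : ℕ} (p : (Fin n → α) → (Fin n → β) → ℝ) : ℝ :=
  -(∑ x, ∑ y, p x y * Real.logb 2 (p x y))

/-- Conditional entropy `H(X_i | X^{i-1}, Y^{i-d})` in bits. -/
def HcondX {n : ℕ} (p : (Fin n → α) → (Fin n → β) → ℝ) (d : ℕ) (i : Fin n) : ℝ :=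
  -(∑ x, ∑ y, p x y * Real.logb 2 (condX p d i x y))

/-- Conditional entropy `H(Y_i | Y^{i-1}, X^{i-d})` in bits. -/
def HcondY {n : ℕ} (p : (Fin n → α) → (Fin n → β) → ℝ) (d : ℕ) (i : Fin n) : ℝ :=
  -(∑ x, ∑ y, p x y * Real.logb 2 (condY p d i x y))

/-- Causally conditional entropy `H(X^n || Y^{n-d}) = Σᵢ H(Xᵢ | X^{i-1}, Y^{i-d})`. -/
def HccX {n : ℕ} (p : (Fin n → α) → (Fin n → β) → ℝ) (d : ℕ) : ℝ := ∑ i, HcondX p d i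

/-- Causally conditional entropy `H(Y^n || X^{n-d})`. -/
def HccY {n : ℕ} (p : (Fin n → α) → (Fin n → β) → ℝ) (d : ℕ) : ℝ := ∑ i, HcondY p d i

/-- Conditional mutual information `I(Y^i; X_i | X^{i-1})`
(as the expectation of `log (p(xᵢ|x^{i-1},y^i) / p(xᵢ|x^{i-1}))`;
note `condX p n` is `p(xᵢ|x^{i-1})`, conditioning on no `y`'s at all). -/
def cmiYX {n : ℕ} (p : (Fin n → α) → (Fin n → β) → ℝ) (i : Fin n) : ℝ :=
  ∑ x, ∑ y, p x y * Real.logb 2 (condX p 0 i x y / condX p n i x y)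

/-- Conditional mutual information `I(X^i; Y_i | Y^{i-1})`. -/
def cmiXY {n : ℕ} (p : (Fin n → α) → (Fin n → β) → ℝ) (i : Fin n) : ℝ :=
  ∑ x, ∑ y, p x y * Real.logb 2 (condY p 0 i x y / condY p n i x y)

/-- Directed information `I(Y^n → X^n) = Σᵢ I(Y^i; X_i | X^{i-1})`. -/
def dirYX {n : ℕ} (p : (Fin n → α) → (Fin n → β) → ℝ) : ℝ := ∑ i, cmiYX p i

/-- Directed information `I(X^n → Y^n) = Σᵢ I(X^i; Y_i | Y^{i-1})`. -/
def dirXY {n : ℕ} (p : (Fin n → α) → (Fin n → β) → ℝ) : ℝ := ∑ i, cmiXY p i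

/-- Directed information `I(Y^{n-1} → X^n) = Σᵢ I(Y^{i-1}; X_i | X^{i-1})`
(the term for `i = 1` vanishes, so we may sum over all `i`). -/
def dirY1X {n : ℕ} (p : (Fin n → α) → (Fin n → β) → ℝ) : ℝ :=
  ∑ i, ∑ x, ∑ y, p x y * Real.logb 2 (condX p 1 i x y / condX p n i x y)

/-- Mutual information `I(X^n; Y^n)` in bits. -/
def miXY {n : ℕ} (p : (Fin n → α) → (Fin n → β) → ℝ) : ℝ :=
  ∑ x, ∑ y, p x y * Real.logb 2 (p x y / (pX p x * pY p y))

/-- A causal gambling strategy: `b i x y` is the fraction of wealth bet on horse `x i`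
given the history `(x^{i-1}, y^i)`; it is nonnegative, depends only on `(x^i, y^i)`
(the bet-upon horse `x i` together with the causal history), and is normalized. -/
def IsCausalBet {n : ℕ} (b : Fin n → (Fin n → α) → (Fin n → β) → ℝ) : Prop :=
  (∀ i x y, 0 ≤ b i x y) ∧
  (∀ i x x' y y', (∀ j, j ≤ i → x j = x' j) → (∀ j, j ≤ i → y j = y' j) →
    b i x y = b i x' y') ∧
  (∀ i x y, ∑ a : α, b i (Function.update x i a) y = 1)

/-- `E[log b(X^n || Y^n)]` where `b(x^n||y^n) = ∏ᵢ b(xᵢ|x^{i-1},y^i)`. -/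
def Elogb {n : ℕ} (p : (Fin n → α) → (Fin n → β) → ℝ)
    (b : Fin n → (Fin n → α) → (Fin n → β) → ℝ) : ℝ :=
  ∑ x, ∑ y, p x y * Real.logb 2 (∏ i, b i x y)

/-- The growth `W(X^n||Y^n) = E[log S(X^n||Y^n)]`, where
`S(x^n||y^n) = ∏ᵢ b(xᵢ|x^{i-1},y^i) o(xᵢ|x^{i-1})`. -/
def growthW {n : ℕ} (p : (Fin n → α) → (Fin n → β) → ℝ)
    (o : Fin n → (Fin n → α) → ℝ)
    (b : Fin n → (Fin n → α) → (Fin n → β) → ℝ) : ℝ :=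
  ∑ x, ∑ y, p x y * Real.logb 2 (∏ i, b i x y * o i x)

/-- `E[log o(X^n)]` with `o(x^n) = ∏ᵢ o(xᵢ|x^{i-1})`. -/
def Elogo {n : ℕ} (p : (Fin n → α) → (Fin n → β) → ℝ)
    (o : Fin n → (Fin n → α) → ℝ) : ℝ :=
  ∑ x, ∑ y, p x y * Real.logb 2 (∏ i, o i x)

set_option linter.unusedSectionVars false
set_option maxHeartbeats 1000000
section AuxLemmas

variable {n : ℕ}

/-! ### Basic facts about `pr` -/

lemma pr_nonneg (p : (Fin n → α) → (Fin n → β) → ℝ) (hp0 : ∀ x y, 0 ≤ p x y)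
    (E : (Fin n → α) → (Fin n → β) → Prop) : 0 ≤ pr p E := by
  apply Finset.sum_nonneg; intro x _
  apply Finset.sum_nonneg; intro y _
  split
  · exact hp0 x y
  · exact le_rfl

lemma le_pr (p : (Fin n → α) → (Fin n → β) → ℝ) (hp0 : ∀ x y, 0 ≤ p x y)
    (E : (Fin n → α) → (Fin n → β) → Prop) {x y} (h : E x y) : p x y ≤ pr p E := by
  have hnn : ∀ x' y', 0 ≤ if E x' y' then p x' y' else 0 := by
    intro x' y'; split
    · exact hp0 x' y'
    · exact le_rfl
  have h1 : p x y = (if E x y then p x y else 0) := (if_pos h).symm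
  rw [h1]
  unfold pr
  calc (if E x y then p x y else 0) ≤ ∑ y', if E x y' then p x y' else 0 :=
        Finset.single_le_sum (fun y' _ => hnn x y') (Finset.mem_univ y)
    _ ≤ ∑ x', ∑ y', if E x' y' then p x' y' else 0 :=
        Finset.single_le_sum (fun x' _ => Finset.sum_nonneg fun y' _ => hnn x' y')
          (Finset.mem_univ x)

lemma pr_congr (p : (Fin n → α) → (Fin n → β) → ℝ)
    {E F : (Fin n → α) → (Fin n → β) → Prop} (h : ∀ x y, E x y ↔ F x y) :
    pr p E = pr p F := by
  unfold pr
  refine Finset.sum_congr rfl fun x _ => Finset.sum_congr rfl fun y _ => ?_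
  exact if_congr (h x y) rfl rfl

/-! ### Truncation keys -/

def kxF (i : Fin n) (a₀ : α) (x : Fin n → α) : Fin n → α := fun j => if j ≤ i then x j else a₀
def kxC (i : Fin n) (a₀ : α) (x : Fin n → α) : Fin n → α := fun j => if j < i then x j else a₀
def kyF (i : Fin n) (d : ℕ) (b₀ : β) (y : Fin n → β) : Fin n → β :=
  fun j => if (j : ℕ) + d ≤ (i : ℕ) then y j else b₀

lemma kxF_eq_iff {i : Fin n} {a₀ : α} {x x' : Fin n → α} :
    kxF i a₀ x' = kxF i a₀ x ↔ ∀ j, j ≤ i → x' j = x j := by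
  constructor
  · intro h j hj
    have := congrFun h j
    simpa [kxF, if_pos hj] using this
  · intro h; funext j
    by_cases hj : j ≤ i
    · simp [kxF, hj, h j hj]
    · simp [kxF, hj]

lemma kxC_eq_iff {i : Fin n} {a₀ : α} {x x' : Fin n → α} :
    kxC i a₀ x' = kxC i a₀ x ↔ ∀ j, j < i → x' j = x j := by
  constructor
  · intro h j hj
    have := congrFun h j
    simpa [kxC, if_pos hj] using this
  · intro h; funext j
    by_cases hj : j < i
    · simp [kxC, hj, h j hj]
    · simp [kxC, hj]

lemma kyF_eq_iff {i : Fin n} {d : ℕ} {b₀ : β} {y y' : Fin n → β} :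
    kyF i d b₀ y' = kyF i d b₀ y ↔ ∀ j : Fin n, (j : ℕ) + d ≤ (i : ℕ) → y' j = y j := by
  constructor
  · intro h j hj
    have := congrFun h j
    simpa [kyF, if_pos hj] using this
  · intro h; funext j
    by_cases hj : (j : ℕ) + d ≤ (i : ℕ)
    · simp [kyF, hj, h j hj]
    · simp [kyF, hj]

lemma kxF_idem {i : Fin n} {a₀ : α} {x : Fin n → α} : kxF i a₀ (kxF i a₀ x) = kxF i a₀ x := by
  funext j; by_cases hj : j ≤ i <;> simp [kxF, hj]

lemma kxC_idem {i : Fin n} {a₀ : α} {x : Fin n → α} : kxC i a₀ (kxC i a₀ x) = kxC i a₀ x := by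
  funext j; by_cases hj : j < i <;> simp [kxC, hj]

lemma kyF_idem {i : Fin n} {d : ℕ} {b₀ : β} {y : Fin n → β} :
    kyF i d b₀ (kyF i d b₀ y) = kyF i d b₀ y := by
  funext j; by_cases hj : (j : ℕ) + d ≤ (i : ℕ) <;> simp [kyF, hj]

/-! ### Events -/

def nev (i : Fin n) (d : ℕ) (x : Fin n → α) (y : Fin n → β) :
    (Fin n → α) → (Fin n → β) → Prop :=
  fun x' y' => (∀ j, j ≤ i → x' j = x j) ∧ ∀ j : Fin n, (j : ℕ) + d ≤ (i : ℕ) → y' j = y j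

def dev (i : Fin n) (d : ℕ) (x : Fin n → α) (y : Fin n → β) :
    (Fin n → α) → (Fin n → β) → Prop :=
  fun x' y' => (∀ j, j < i → x' j = x j) ∧ ∀ j : Fin n, (j : ℕ) + d ≤ (i : ℕ) → y' j = y j

lemma nev_self {i : Fin n} {d : ℕ} {x : Fin n → α} {y : Fin n → β} : nev i d x y x y :=
  ⟨fun _ _ => rfl, fun _ _ => rfl⟩

lemma dev_self {i : Fin n} {d : ℕ} {x : Fin n → α} {y : Fin n → β} : dev i d x y x y :=
  ⟨fun _ _ => rfl, fun _ _ => rfl⟩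

lemma condX_eq (p : (Fin n → α) → (Fin n → β) → ℝ) (d : ℕ) (i : Fin n)
    (x : Fin n → α) (y : Fin n → β) :
    condX p d i x y = pr p (nev i d x y) / pr p (dev i d x y) := by
  unfold condX nev dev
  congr 1
  apply pr_congr
  intro x' y'
  constructor
  · rintro ⟨h1, h2, h3⟩
    refine ⟨fun j hj => ?_, h3⟩
    rcases lt_or_eq_of_le hj with hlt | heq
    · exact h1 j hlt
    · rw [heq]; exact h2
  · rintro ⟨h1, h2⟩
    exact ⟨fun j hj => h1 j hj.le, h1 i le_rfl, h2⟩

lemma condX_pos (p : (Fin n → α) → (Fin n → β) → ℝ) (hp0 : ∀ x y, 0 ≤ p x y)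
    (d : ℕ) (i : Fin n) {x y} (h : 0 < p x y) : 0 < condX p d i x y := by
  rw [condX_eq]
  exact div_pos (lt_of_lt_of_le h (le_pr p hp0 _ nev_self))
    (lt_of_lt_of_le h (le_pr p hp0 _ dev_self))

lemma condX_nonneg (p : (Fin n → α) → (Fin n → β) → ℝ) (hp0 : ∀ x y, 0 ≤ p x y)
    (d : ℕ) (i : Fin n) (x : Fin n → α) (y : Fin n → β) : 0 ≤ condX p d i x y := by
  rw [condX_eq]
  exact div_nonneg (pr_nonneg p hp0 _) (pr_nonneg p hp0 _)

lemma nev_congr (p : (Fin n → α) → (Fin n → β) → ℝ) {i : Fin n} {d : ℕ}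
    {x x' : Fin n → α} {y y' : Fin n → β}
    (hx : ∀ j, j ≤ i → x j = x' j) (hy : ∀ j : Fin n, (j : ℕ) + d ≤ (i : ℕ) → y j = y' j) :
    pr p (nev i d x y) = pr p (nev i d x' y') := by
  apply pr_congr
  intro u v
  unfold nev
  constructor
  · rintro ⟨h1, h2⟩
    exact ⟨fun j hj => (h1 j hj).trans (hx j hj), fun j hj => (h2 j hj).trans (hy j hj)⟩
  · rintro ⟨h1, h2⟩
    exact ⟨fun j hj => (h1 j hj).trans (hx j hj).symm,
      fun j hj => (h2 j hj).trans (hy j hj).symm⟩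

lemma dev_congr (p : (Fin n → α) → (Fin n → β) → ℝ) {i : Fin n} {d : ℕ}
    {x x' : Fin n → α} {y y' : Fin n → β}
    (hx : ∀ j, j < i → x j = x' j) (hy : ∀ j : Fin n, (j : ℕ) + d ≤ (i : ℕ) → y j = y' j) :
    pr p (dev i d x y) = pr p (dev i d x' y') := by
  apply pr_congr
  intro u v
  unfold dev
  constructor
  · rintro ⟨h1, h2⟩
    exact ⟨fun j hj => (h1 j hj).trans (hx j hj), fun j hj => (h2 j hj).trans (hy j hj)⟩
  · rintro ⟨h1, h2⟩
    exact ⟨fun j hj => (h1 j hj).trans (hx j hj).symm,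
      fun j hj => (h2 j hj).trans (hy j hj).symm⟩

lemma pmf_nonempty (p : (Fin n → α) → (Fin n → β) → ℝ) (hp : IsPmf p) :
    Nonempty (Fin n → α) ∧ Nonempty (Fin n → β) := by
  have h1 : (∑ x, ∑ y, p x y) ≠ 0 := by rw [hp.2]; norm_num
  constructor
  · by_contra h
    have : IsEmpty (Fin n → α) := not_nonempty_iff.mp h
    exact h1 (by simp)
  · by_contra h
    have : IsEmpty (Fin n → β) := not_nonempty_iff.mp h
    exact h1 (by simp)

lemma alpha_nonempty (p : (Fin n → α) → (Fin n → β) → ℝ) (hp : IsPmf p) (i : Fin n) :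
    Nonempty α := by
  obtain ⟨⟨f⟩, -⟩ := pmf_nonempty p hp
  exact ⟨f i⟩

lemma beta_nonempty (p : (Fin n → α) → (Fin n → β) → ℝ) (hp : IsPmf p) (i : Fin n) :
    Nonempty β := by
  obtain ⟨-, ⟨g⟩⟩ := pmf_nonempty p hp
  exact ⟨g i⟩

end AuxLemmas
section KeyLemmas

variable {n : ℕ}

def keyF (i : Fin n) (d : ℕ) (a₀ : α) (b₀ : β) (z : (Fin n → α) × (Fin n → β)) :
    (Fin n → α) × (Fin n → β) := (kxF i a₀ z.1, kyF i d b₀ z.2)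

def keyC (i : Fin n) (d : ℕ) (a₀ : α) (b₀ : β) (z : (Fin n → α) × (Fin n → β)) :
    (Fin n → α) × (Fin n → β) := (kxC i a₀ z.1, kyF i d b₀ z.2)

lemma keyF_idem {i : Fin n} {d : ℕ} {a₀ : α} {b₀ : β} {z : (Fin n → α) × (Fin n → β)} :
    keyF i d a₀ b₀ (keyF i d a₀ b₀ z) = keyF i d a₀ b₀ z := by
  unfold keyF
  exact Prod.ext_iff.mpr ⟨kxF_idem, kyF_idem⟩

lemma keyC_idem {i : Fin n} {d : ℕ} {a₀ : α} {b₀ : β} {z : (Fin n → α) × (Fin n → β)} :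
    keyC i d a₀ b₀ (keyC i d a₀ b₀ z) = keyC i d a₀ b₀ z := by
  unfold keyC
  exact Prod.ext_iff.mpr ⟨kxC_idem, kyF_idem⟩

lemma keyF_eq_iff {i : Fin n} {d : ℕ} {a₀ : α} {b₀ : β}
    {z w : (Fin n → α) × (Fin n → β)} :
    keyF i d a₀ b₀ z = keyF i d a₀ b₀ w ↔
      ((∀ j, j ≤ i → z.1 j = w.1 j) ∧
        ∀ j : Fin n, (j : ℕ) + d ≤ (i : ℕ) → z.2 j = w.2 j) := by
  unfold keyF
  rw [Prod.ext_iff]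
  exact and_congr kxF_eq_iff kyF_eq_iff

lemma keyC_eq_iff {i : Fin n} {d : ℕ} {a₀ : α} {b₀ : β}
    {z w : (Fin n → α) × (Fin n → β)} :
    keyC i d a₀ b₀ z = keyC i d a₀ b₀ w ↔
      ((∀ j, j < i → z.1 j = w.1 j) ∧
        ∀ j : Fin n, (j : ℕ) + d ≤ (i : ℕ) → z.2 j = w.2 j) := by
  unfold keyC
  rw [Prod.ext_iff]
  exact and_congr kxC_eq_iff kyF_eq_iff

lemma nev_iff_keyF {i : Fin n} {d : ℕ} {a₀ : α} {b₀ : β}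
    {z w : (Fin n → α) × (Fin n → β)} :
    nev i d w.1 w.2 z.1 z.2 ↔ keyF i d a₀ b₀ z = keyF i d a₀ b₀ w := by
  rw [keyF_eq_iff]; rfl

lemma dev_iff_keyC {i : Fin n} {d : ℕ} {a₀ : α} {b₀ : β}
    {z w : (Fin n → α) × (Fin n → β)} :
    dev i d w.1 w.2 z.1 z.2 ↔ keyC i d a₀ b₀ z = keyC i d a₀ b₀ w := by
  rw [keyC_eq_iff]; rfl

end KeyLemmas
section StepMain

variable {n : ℕ}

lemma key_congr (p : (Fin n → α) → (Fin n → β) → ℝ)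
    (b : (Fin n → α) → (Fin n → β) → ℝ) {i : Fin n} {d : ℕ} {a₀ : α} {b₀ : β}
    (hbc : ∀ x x' y y', (∀ j, j ≤ i → x j = x' j) →
      (∀ j : Fin n, (j : ℕ) + d ≤ (i : ℕ) → y j = y' j) → b x y = b x' y')
    {z w : (Fin n → α) × (Fin n → β)} (h : keyF i d a₀ b₀ z = keyF i d a₀ b₀ w) :
    b z.1 z.2 = b w.1 w.2 ∧
      pr p (nev i d z.1 z.2) = pr p (nev i d w.1 w.2) ∧
      pr p (dev i d z.1 z.2) = pr p (dev i d w.1 w.2) := by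
  obtain ⟨hx, hy⟩ := keyF_eq_iff.mp h
  exact ⟨hbc _ _ _ _ hx hy, nev_congr p hx hy, dev_congr p (fun j hj => hx j hj.le) hy⟩

lemma nev_fiber (p : (Fin n → α) → (Fin n → β) → ℝ) (i : Fin n) (d : ℕ) (a₀ : α) (b₀ : β)
    (z : (Fin n → α) × (Fin n → β)) :
    pr p (nev i d z.1 z.2) =
      ∑ w ∈ Finset.univ.filter (fun w => keyF i d a₀ b₀ w = keyF i d a₀ b₀ z),
        p w.1 w.2 := by
  rw [Finset.sum_filter]
  calc pr p (nev i d z.1 z.2)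
      = ∑ x', ∑ y', if nev i d z.1 z.2 x' y' then p x' y' else 0 := rfl
    _ = ∑ x', ∑ y', if keyF i d a₀ b₀ ((x', y') : (Fin n → α) × (Fin n → β)) = keyF i d a₀ b₀ z
          then p x' y' else 0 := by
        refine Finset.sum_congr rfl fun x' _ => Finset.sum_congr rfl fun y' _ => ?_
        exact if_congr (nev_iff_keyF (z := ((x', y') : (Fin n → α) × (Fin n → β))) (w := z))
          rfl rfl
    _ = ∑ w : (Fin n → α) × (Fin n → β),
          if keyF i d a₀ b₀ w = keyF i d a₀ b₀ z then p w.1 w.2 else 0 :=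
        (Fintype.sum_prod_type (fun w : (Fin n → α) × (Fin n → β) =>
          if keyF i d a₀ b₀ w = keyF i d a₀ b₀ z then p w.1 w.2 else 0)).symm

lemma dev_fiber (p : (Fin n → α) → (Fin n → β) → ℝ) (i : Fin n) (d : ℕ) (a₀ : α) (b₀ : β)
    (z : (Fin n → α) × (Fin n → β)) :
    pr p (dev i d z.1 z.2) =
      ∑ w ∈ Finset.univ.filter (fun w => keyC i d a₀ b₀ w = keyC i d a₀ b₀ z),
        p w.1 w.2 := by
  rw [Finset.sum_filter]
  calc pr p (dev i d z.1 z.2)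
      = ∑ x', ∑ y', if dev i d z.1 z.2 x' y' then p x' y' else 0 := rfl
    _ = ∑ x', ∑ y', if keyC i d a₀ b₀ ((x', y') : (Fin n → α) × (Fin n → β)) = keyC i d a₀ b₀ z
          then p x' y' else 0 := by
        refine Finset.sum_congr rfl fun x' _ => Finset.sum_congr rfl fun y' _ => ?_
        exact if_congr (dev_iff_keyC (z := ((x', y') : (Fin n → α) × (Fin n → β))) (w := z))
          rfl rfl
    _ = ∑ w : (Fin n → α) × (Fin n → β),
          if keyC i d a₀ b₀ w = keyC i d a₀ b₀ z then p w.1 w.2 else 0 :=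
        (Fintype.sum_prod_type (fun w : (Fin n → α) × (Fin n → β) =>
          if keyC i d a₀ b₀ w = keyC i d a₀ b₀ z then p w.1 w.2 else 0)).symm

lemma step_main (p : (Fin n → α) → (Fin n → β) → ℝ) (hp : IsPmf p)
    (i : Fin n) (d : ℕ) (b : (Fin n → α) → (Fin n → β) → ℝ)
    (hb0 : ∀ x y, 0 ≤ b x y)
    (hbc : ∀ x x' y y', (∀ j, j ≤ i → x j = x' j) →
      (∀ j : Fin n, (j : ℕ) + d ≤ (i : ℕ) → y j = y' j) → b x y = b x' y')
    (hbn : ∀ x y, ∑ a : α, b (Function.update x i a) y = 1) :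
    ∑ x, ∑ y, p x y * (b x y * (pr p (dev i d x y) / pr p (nev i d x y))) ≤ 1 := by
  obtain ⟨a₀⟩ := alpha_nonempty p hp i
  obtain ⟨b₀⟩ := beta_nonempty p hp i
  set F : (Fin n → α) × (Fin n → β) → ℝ := fun z =>
    p z.1 z.2 * (b z.1 z.2 * (pr p (dev i d z.1 z.2) / pr p (nev i d z.1 z.2))) with hF
  set G : (Fin n → α) × (Fin n → β) → ℝ := fun k =>
    if keyF i d a₀ b₀ k = k then b k.1 k.2 * pr p (dev i d k.1 k.2) else 0 with hG
  set G' : (Fin n → α) × (Fin n → β) → ℝ := fun m =>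
    if keyC i d a₀ b₀ m = m then pr p (dev i d m.1 m.2) else 0 with hG'
  -- fiberwise bound for the fine key
  have hfiber_le : ∀ k : (Fin n → α) × (Fin n → β),
      (∑ z ∈ Finset.univ.filter (fun z => keyF i d a₀ b₀ z = k), F z) ≤ G k := by
    intro k
    by_cases hk : keyF i d a₀ b₀ k = k
    · by_cases hN : pr p (nev i d k.1 k.2) = 0
      · have hz : ∀ z ∈ Finset.univ.filter (fun z => keyF i d a₀ b₀ z = k), F z = 0 := by
          intro z hz
          rw [Finset.mem_filter] at hz
          have hkey : keyF i d a₀ b₀ z = keyF i d a₀ b₀ k := hz.2.trans hk.symm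
          obtain ⟨-, hNz, -⟩ := key_congr p b hbc hkey
          have hpz : p z.1 z.2 = 0 := by
            have h1 : p z.1 z.2 ≤ pr p (nev i d z.1 z.2) := le_pr p hp.1 _ nev_self
            rw [hNz, hN] at h1
            exact le_antisymm h1 (hp.1 _ _)
          simp [hF, hpz]
        rw [Finset.sum_eq_zero hz, hG]
        simp only [if_pos hk]
        exact mul_nonneg (hb0 _ _) (pr_nonneg p hp.1 _)
      · have hsum : ∑ z ∈ Finset.univ.filter (fun z => keyF i d a₀ b₀ z = k), p z.1 z.2
            = pr p (nev i d k.1 k.2) := by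
          rw [nev_fiber p i d a₀ b₀ k]
          simp only [hk]
        have hFz : ∀ z ∈ Finset.univ.filter (fun z => keyF i d a₀ b₀ z = k),
            F z = p z.1 z.2 *
              (b k.1 k.2 * (pr p (dev i d k.1 k.2) / pr p (nev i d k.1 k.2))) := by
          intro z hz
          rw [Finset.mem_filter] at hz
          have hkey : keyF i d a₀ b₀ z = keyF i d a₀ b₀ k := hz.2.trans hk.symm
          obtain ⟨hbz, hNz, hDz⟩ := key_congr p b hbc hkey
          simp only [hF, hbz, hNz, hDz]
        rw [Finset.sum_congr rfl hFz, ← Finset.sum_mul, hsum, hG]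
        simp only [if_pos hk]
        rw [mul_comm (pr p (nev i d k.1 k.2)) _, mul_assoc, div_mul_cancel₀ _ hN]
    · have hempty : Finset.univ.filter (fun z => keyF i d a₀ b₀ z = k) = ∅ := by
        rw [Finset.filter_eq_empty_iff]
        intro z _ h
        exact hk (by rw [← h]; exact keyF_idem)
      rw [hempty, Finset.sum_empty, hG]
      simp only [if_neg hk, le_refl]
  -- fiberwise evaluation for the coarse key
  have hGfiber : ∀ m : (Fin n → α) × (Fin n → β),
      (∑ k ∈ Finset.univ.filter (fun k => keyC i d a₀ b₀ k = m), G k) = G' m := by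
    intro m
    by_cases hm : keyC i d a₀ b₀ m = m
    · have hmx : kxC i a₀ m.1 = m.1 := congrArg Prod.fst hm
      have hmy : kyF i d b₀ m.2 = m.2 := congrArg Prod.snd hm
      have hma : ∀ j : Fin n, ¬ j < i → m.1 j = a₀ := by
        intro j hj
        have := congrFun hmx j
        simpa [kxC, hj] using this.symm
      have h1 : (∑ k ∈ Finset.univ.filter (fun k => keyC i d a₀ b₀ k = m), G k)
          = ∑ k ∈ (Finset.univ.filter (fun k => keyC i d a₀ b₀ k = m)).filter
              (fun k => keyF i d a₀ b₀ k = k), b k.1 k.2 * pr p (dev i d k.1 k.2) :=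
        (Finset.sum_filter _ _).symm
      have h2 : (Finset.univ.filter (fun k => keyC i d a₀ b₀ k = m)).filter
            (fun k => keyF i d a₀ b₀ k = k)
          = Finset.image (fun a : α =>
              ((Function.update m.1 i a, m.2) : (Fin n → α) × (Fin n → β))) Finset.univ := by
        ext k
        simp only [Finset.mem_filter, Finset.mem_image, Finset.mem_univ, true_and]
        constructor
        · rintro ⟨hc, hf⟩
          have hx1 : kxC i a₀ k.1 = m.1 := congrArg Prod.fst hc
          have hy1 : kyF i d b₀ k.2 = m.2 := congrArg Prod.snd hc
          have hx2 : kxF i a₀ k.1 = k.1 := congrArg Prod.fst hf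
          refine ⟨k.1 i, ?_⟩
          refine Prod.ext_iff.mpr ⟨?_, ?_⟩
          · show Function.update m.1 i (k.1 i) = k.1
            funext j
            by_cases hji : j = i
            · subst hji; simp
            · rw [Function.update_of_ne hji]
              by_cases hjlt : j < i
              · have := congrFun hx1 j
                simpa [kxC, hjlt] using this.symm
              · have hm1 : m.1 j = a₀ := by
                  have := congrFun hx1 j
                  simpa [kxC, hjlt] using this.symm
                have hjle : ¬ j ≤ i := fun hle => hji (le_antisymm hle (not_lt.mp hjlt))
                have hk1 : k.1 j = a₀ := by
                  have := congrFun hx2 j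
                  simpa [kxF, hjle] using this.symm
                rw [hm1, hk1]
          · have hy2 : kyF i d b₀ k.2 = k.2 := congrArg Prod.snd hf
            show m.2 = k.2
            rw [← hy1, hy2]
        · rintro ⟨a, rfl⟩
          refine ⟨Prod.ext_iff.mpr ⟨?_, hmy⟩, Prod.ext_iff.mpr ⟨?_, hmy⟩⟩
          · show kxC i a₀ (Function.update m.1 i a) = m.1
            funext j
            by_cases hj : j < i
            · show (if j < i then Function.update m.1 i a j else a₀) = m.1 j
              rw [if_pos hj, Function.update_of_ne (ne_of_lt hj)]
            · show (if j < i then Function.update m.1 i a j else a₀) = m.1 j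
              rw [if_neg hj, hma j hj]
          · show kxF i a₀ (Function.update m.1 i a) = Function.update m.1 i a
            funext j
            by_cases hj : j ≤ i
            · show (if j ≤ i then Function.update m.1 i a j else a₀) = Function.update m.1 i a j
              rw [if_pos hj]
            · have hjne : j ≠ i := fun e => hj (le_of_eq e)
              have hjlt : ¬ j < i := fun h' => hj h'.le
              show (if j ≤ i then Function.update m.1 i a j else a₀) = Function.update m.1 i a j
              rw [if_neg hj, Function.update_of_ne hjne, hma j hjlt]
      have hinj : ∀ a ∈ Finset.univ, ∀ a' ∈ (Finset.univ : Finset α),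
          (fun a : α => ((Function.update m.1 i a, m.2) : (Fin n → α) × (Fin n → β))) a
            = (fun a : α => ((Function.update m.1 i a, m.2) : (Fin n → α) × (Fin n → β))) a'
          → a = a' := by
        intro a _ a' _ h
        have := congrFun (congrArg Prod.fst h) i
        simpa using this
      rw [h1, h2, Finset.sum_image hinj]
      have h3 : ∀ a : α,
          pr p (dev i d (Function.update m.1 i a) m.2) = pr p (dev i d m.1 m.2) := by
        intro a
        exact dev_congr p (fun j hj => Function.update_of_ne (ne_of_lt hj) _ _)
          (fun _ _ => rfl)
      have h4 : ∀ a ∈ Finset.univ,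
          b (Function.update m.1 i a) m.2 * pr p (dev i d (Function.update m.1 i a) m.2)
          = b (Function.update m.1 i a) m.2 * pr p (dev i d m.1 m.2) := by
        intro a _; rw [h3 a]
      rw [Finset.sum_congr rfl h4, ← Finset.sum_mul, hbn m.1 m.2, one_mul, hG']
      simp only [if_pos hm]
    · have hempty : Finset.univ.filter (fun k => keyC i d a₀ b₀ k = m) = ∅ := by
        rw [Finset.filter_eq_empty_iff]
        intro z _ h
        exact hm (by rw [← h]; exact keyC_idem)
      rw [hempty, Finset.sum_empty, hG']
      simp only [if_neg hm]
  -- coarse fibers sum to the full mass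
  have hG'eq : ∀ m : (Fin n → α) × (Fin n → β),
      G' m = ∑ z ∈ Finset.univ.filter (fun z => keyC i d a₀ b₀ z = m), p z.1 z.2 := by
    intro m
    by_cases hm : keyC i d a₀ b₀ m = m
    · rw [hG']
      simp only [if_pos hm]
      rw [dev_fiber p i d a₀ b₀ m]
      simp only [hm]
    · have hempty : Finset.univ.filter (fun z => keyC i d a₀ b₀ z = m) = ∅ := by
        rw [Finset.filter_eq_empty_iff]
        intro z _ h
        exact hm (by rw [← h]; exact keyC_idem)
      rw [hempty, Finset.sum_empty, hG']
      simp only [if_neg hm]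
  calc ∑ x, ∑ y, p x y * (b x y * (pr p (dev i d x y) / pr p (nev i d x y)))
      = ∑ z : (Fin n → α) × (Fin n → β), F z := (Fintype.sum_prod_type F).symm
    _ = ∑ k : (Fin n → α) × (Fin n → β),
          ∑ z ∈ Finset.univ.filter (fun z => keyF i d a₀ b₀ z = k), F z :=
        (Finset.sum_fiberwise Finset.univ (keyF i d a₀ b₀) F).symm
    _ ≤ ∑ k : (Fin n → α) × (Fin n → β), G k :=
        Finset.sum_le_sum fun k _ => hfiber_le k
    _ = ∑ m : (Fin n → α) × (Fin n → β),
          ∑ k ∈ Finset.univ.filter (fun k => keyC i d a₀ b₀ k = m), G k :=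
        (Finset.sum_fiberwise Finset.univ (keyC i d a₀ b₀) G).symm
    _ = ∑ m : (Fin n → α) × (Fin n → β), G' m :=
        Finset.sum_congr rfl fun m _ => hGfiber m
    _ = ∑ m : (Fin n → α) × (Fin n → β),
          ∑ z ∈ Finset.univ.filter (fun z => keyC i d a₀ b₀ z = m), p z.1 z.2 :=
        Finset.sum_congr rfl fun m _ => hG'eq m
    _ = ∑ z : (Fin n → α) × (Fin n → β), p z.1 z.2 :=
        Finset.sum_fiberwise Finset.univ (keyC i d a₀ b₀) _
    _ = 1 := by rw [Fintype.sum_prod_type]; exact hp.2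

end StepMain
section Gibbs

variable {n : ℕ}

lemma step_gibbs (p : (Fin n → α) → (Fin n → β) → ℝ) (hp : IsPmf p)
    (i : Fin n) (d : ℕ) (b : (Fin n → α) → (Fin n → β) → ℝ)
    (hb0 : ∀ x y, 0 ≤ b x y)
    (hbc : ∀ x x' y y', (∀ j, j ≤ i → x j = x' j) →
      (∀ j : Fin n, (j : ℕ) + d ≤ (i : ℕ) → y j = y' j) → b x y = b x' y')
    (hbn : ∀ x y, ∑ a : α, b (Function.update x i a) y = 1)
    (hbp : ∀ x y, 0 < p x y → 0 < b x y) :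
    ∑ x, ∑ y, p x y * Real.logb 2 (b x y) ≤
      ∑ x, ∑ y, p x y * Real.logb 2 (condX p d i x y) := by
  have hlog2 : (0:ℝ) < Real.log 2 := Real.log_pos one_lt_two
  have hterm : ∀ x y, p x y * Real.logb 2 (b x y) - p x y * Real.logb 2 (condX p d i x y)
      ≤ (p x y * (b x y * (pr p (dev i d x y) / pr p (nev i d x y))) - p x y) /
        Real.log 2 := by
    intro x y
    rcases eq_or_lt_of_le (hp.1 x y) with h0 | h0
    · rw [← h0]; simp
    · have hbxy := hbp x y h0
      have hN : 0 < pr p (nev i d x y) := lt_of_lt_of_le h0 (le_pr p hp.1 _ nev_self)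
      have hD : 0 < pr p (dev i d x y) := lt_of_lt_of_le h0 (le_pr p hp.1 _ dev_self)
      have hq : 0 < condX p d i x y := condX_pos p hp.1 d i h0
      have hratio : b x y * (pr p (dev i d x y) / pr p (nev i d x y))
          = b x y / condX p d i x y := by
        rw [condX_eq, div_div_eq_mul_div, ← mul_div_assoc]
      rw [hratio]
      have hlogle : Real.logb 2 (b x y) - Real.logb 2 (condX p d i x y)
          ≤ (b x y / condX p d i x y - 1) / Real.log 2 := by
        rw [← Real.logb_div (ne_of_gt hbxy) (ne_of_gt hq), Real.logb]
        exact (div_le_div_iff_of_pos_right hlog2).mpr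
          (Real.log_le_sub_one_of_pos (div_pos hbxy hq))
      calc p x y * Real.logb 2 (b x y) - p x y * Real.logb 2 (condX p d i x y)
          = p x y * (Real.logb 2 (b x y) - Real.logb 2 (condX p d i x y)) := by ring
        _ ≤ p x y * ((b x y / condX p d i x y - 1) / Real.log 2) :=
            mul_le_mul_of_nonneg_left hlogle h0.le
        _ = (p x y * (b x y / condX p d i x y) - p x y) / Real.log 2 := by ring
  have hmain := step_main p hp i d b hb0 hbc hbn
  have e1 : (∑ x, ∑ y, p x y * Real.logb 2 (b x y)) -
      (∑ x, ∑ y, p x y * Real.logb 2 (condX p d i x y))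
      = ∑ x, ∑ y, (p x y * Real.logb 2 (b x y) -
          p x y * Real.logb 2 (condX p d i x y)) := by
    rw [← Finset.sum_sub_distrib]
    exact Finset.sum_congr rfl fun x _ => (Finset.sum_sub_distrib _ _).symm
  have e2 : (∑ x, ∑ y, (p x y * Real.logb 2 (b x y) -
      p x y * Real.logb 2 (condX p d i x y)))
      ≤ ∑ x, ∑ y, (p x y * (b x y * (pr p (dev i d x y) / pr p (nev i d x y))) - p x y) /
          Real.log 2 :=
    Finset.sum_le_sum fun x _ => Finset.sum_le_sum fun y _ => hterm x y
  have e3 : (∑ x, ∑ y, (p x y * (b x y * (pr p (dev i d x y) / pr p (nev i d x y)))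
        - p x y) / Real.log 2)
      = ((∑ x, ∑ y, p x y * (b x y * (pr p (dev i d x y) / pr p (nev i d x y)))) - 1) /
        Real.log 2 := by
    rw [← hp.2, ← Finset.sum_sub_distrib, Finset.sum_div]
    refine Finset.sum_congr rfl fun x _ => ?_
    rw [← Finset.sum_sub_distrib, Finset.sum_div]
  have e4 : ((∑ x, ∑ y, p x y * (b x y * (pr p (dev i d x y) / pr p (nev i d x y)))) - 1) /
      Real.log 2 ≤ 0 :=
    div_nonpos_of_nonpos_of_nonneg (by linarith) hlog2.le
  have e5 : (∑ x, ∑ y, p x y * Real.logb 2 (b x y)) -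
      (∑ x, ∑ y, p x y * Real.logb 2 (condX p d i x y)) ≤ 0 := by
    rw [e1]
    exact le_trans e2 (le_trans (le_of_eq e3) e4)
  linarith

lemma prod_pos_factor {f : Fin n → ℝ} (h0 : ∀ i, 0 ≤ f i) (hprod : 0 < ∏ i, f i)
    (i : Fin n) : 0 < f i := by
  rcases (h0 i).lt_or_eq with h | h
  · exact h
  · exfalso
    rw [Finset.prod_eq_zero (Finset.mem_univ i) h.symm] at hprod
    exact lt_irrefl 0 hprod

lemma growth_decomp (p : (Fin n → α) → (Fin n → β) → ℝ) (hp0 : ∀ x y, 0 ≤ p x y)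
    (o : Fin n → (Fin n → α) → ℝ) (ho : ∀ i x, 0 < o i x)
    (b : Fin n → (Fin n → α) → (Fin n → β) → ℝ)
    (hb0 : ∀ i x y, 0 ≤ b i x y)
    (hbp : ∀ x y, 0 < p x y → 0 < ∏ i, b i x y) :
    growthW p o b = Elogo p o + ∑ i, ∑ x, ∑ y, p x y * Real.logb 2 (b i x y) := by
  have hswap : ∑ i, ∑ x, ∑ y, p x y * Real.logb 2 (b i x y)
      = ∑ x, ∑ y, p x y * ∑ i, Real.logb 2 (b i x y) := by
    rw [Finset.sum_comm]
    refine Finset.sum_congr rfl fun x _ => ?_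
    rw [Finset.sum_comm]
    refine Finset.sum_congr rfl fun y _ => ?_
    rw [Finset.mul_sum]
  rw [hswap]
  unfold growthW Elogo
  rw [← Finset.sum_add_distrib]
  refine Finset.sum_congr rfl fun x _ => ?_
  rw [← Finset.sum_add_distrib]
  refine Finset.sum_congr rfl fun y _ => ?_
  rcases eq_or_lt_of_le (hp0 x y) with h0 | h0
  · rw [← h0]; ring
  · have hbprod := hbp x y h0
    have hoprod : 0 < ∏ i, o i x := Finset.prod_pos fun i _ => ho i x
    have h1 : ∏ i, b i x y * o i x = (∏ i, b i x y) * ∏ i, o i x :=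
      Finset.prod_mul_distrib
    rw [h1, Real.logb_mul (ne_of_gt hbprod) (ne_of_gt hoprod),
      Real.logb_prod Finset.univ (fun i => b i x y)
        (fun i _ => ne_of_gt (prod_pos_factor (fun i => hb0 i x y) hbprod i))]
    ring

end Gibbs
section Telescope

variable {n : ℕ}

lemma vac_nd {i j : Fin n} : ¬ ((j : ℕ) + n ≤ (i : ℕ)) := by
  have := i.isLt
  omega

lemma condX_n_eq (p : (Fin n → α) → (Fin n → β) → ℝ) (i : Fin n)
    (x : Fin n → α) (y : Fin n → β) :
    condX p n i x y =
      pr p (fun x' _ => ∀ j : Fin n, (j : ℕ) < (i : ℕ) + 1 → x' j = x j) /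
      pr p (fun x' _ => ∀ j : Fin n, (j : ℕ) < (i : ℕ) → x' j = x j) := by
  unfold condX
  congr 1
  · apply pr_congr
    intro x' y'
    constructor
    · rintro ⟨h1, h2, h3⟩ j hj
      rcases Nat.lt_or_ge (j : ℕ) (i : ℕ) with hlt | hge
      · exact h1 j (Fin.lt_def.mpr hlt)
      · have hje : j = i := Fin.ext (by omega)
        rw [hje]; exact h2
    · intro h
      exact ⟨fun j hj => h j (by have := Fin.lt_def.mp hj; omega),
        h i (Nat.lt_succ_self _), fun j hj => absurd hj vac_nd⟩
  · apply pr_congr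
    intro x' y'
    constructor
    · rintro ⟨h1, h2⟩ j hj
      exact h1 j (Fin.lt_def.mpr hj)
    · intro h
      exact ⟨fun j hj => h j (Fin.lt_def.mp hj), fun j hj => absurd hj vac_nd⟩

lemma prod_condX_n (p : (Fin n → α) → (Fin n → β) → ℝ) (hp : IsPmf p)
    (x : Fin n → α) (y : Fin n → β) (h : 0 < p x y) :
    ∏ i, condX p n i x y = pX p x := by
  set g : ℕ → ℝ := fun k => pr p (fun x' _ => ∀ j : Fin n, (j : ℕ) < k → x' j = x j) with hg
  have hgpos : ∀ k, 0 < g k := fun k =>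
    lt_of_lt_of_le h (le_pr p hp.1 _ (fun j _ => rfl))
  have hc : ∀ i : Fin n, condX p n i x y = g ((i : ℕ) + 1) / g (i : ℕ) := fun i =>
    condX_n_eq p i x y
  have htel : ∀ K, (∏ k ∈ Finset.range K, (g (k + 1) / g k)) = g K / g 0 := by
    intro K
    induction K with
    | zero => simp [div_self (ne_of_gt (hgpos 0))]
    | succ K ih =>
      rw [Finset.prod_range_succ, ih]
      have h1 : g 0 ≠ 0 := ne_of_gt (hgpos 0)
      have h2 : g K ≠ 0 := ne_of_gt (hgpos K)
      field_simp
  have h0 : g 0 = 1 := by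
    have hall : ∀ (x' : Fin n → α) (y' : Fin n → β),
        (∀ j : Fin n, (j : ℕ) < 0 → x' j = x j) := fun _ _ j hj =>
      absurd hj (Nat.not_lt_zero _)
    rw [hg]
    show pr p _ = 1
    unfold pr
    rw [← hp.2]
    refine Finset.sum_congr rfl fun x' _ => Finset.sum_congr rfl fun y' _ => ?_
    rw [if_pos (hall x' y')]
  have hn' : g n = pX p x := by
    rw [hg]
    show pr p _ = pX p x
    have hiff : ∀ x' : Fin n → α, (∀ j : Fin n, (j : ℕ) < n → x' j = x j) ↔ x' = x :=
      fun x' => ⟨fun h' => funext fun j => h' j j.isLt, fun e j _ => congrFun e j⟩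
    rw [pr_congr p (fun x' y' => hiff x' : ∀ x' y',
      (∀ j : Fin n, (j : ℕ) < n → x' j = x j) ↔ x' = x)]
    unfold pr pX
    rw [Finset.sum_eq_single x]
    · simp
    · intro x' _ hne
      apply Finset.sum_eq_zero
      intro y' _
      rw [if_neg hne]
    · intro h'
      exact absurd (Finset.mem_univ x) h'
  calc ∏ i, condX p n i x y
      = ∏ i : Fin n, g ((i : ℕ) + 1) / g (i : ℕ) := Finset.prod_congr rfl fun i _ => hc i
    _ = ∏ k ∈ Finset.range n, g (k + 1) / g k := Fin.prod_univ_eq_prod_range (fun k => g (k + 1) / g k) n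
    _ = g n / g 0 := htel n
    _ = pX p x := by rw [h0, hn', div_one]

lemma swap_sum (p : (Fin n → α) → (Fin n → β) → ℝ)
    (f : Fin n → (Fin n → α) → (Fin n → β) → ℝ) :
    ∑ i, ∑ x, ∑ y, p x y * f i x y = ∑ x, ∑ y, p x y * ∑ i, f i x y := by
  rw [Finset.sum_comm]
  refine Finset.sum_congr rfl fun x _ => ?_
  rw [Finset.sum_comm]
  refine Finset.sum_congr rfl fun y _ => ?_
  rw [Finset.mul_sum]

lemma sum_HcondX_n (p : (Fin n → α) → (Fin n → β) → ℝ) (hp : IsPmf p) :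
    ∑ i, HcondX p n i = HX p := by
  have key : ∑ i, ∑ x, ∑ y, p x y * Real.logb 2 (condX p n i x y)
      = ∑ x, ∑ y, p x y * Real.logb 2 (pX p x) := by
    rw [swap_sum p (fun i x y => Real.logb 2 (condX p n i x y))]
    refine Finset.sum_congr rfl fun x _ => Finset.sum_congr rfl fun y _ => ?_
    rcases eq_or_lt_of_le (hp.1 x y) with h0 | h0
    · rw [← h0]; ring
    · congr 1
      rw [← Real.logb_prod Finset.univ (fun i => condX p n i x y)
        (fun i _ => ne_of_gt (condX_pos p hp.1 n i h0))]
      rw [prod_condX_n p hp x y h0]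
  calc ∑ i, HcondX p n i
      = ∑ i, -(∑ x, ∑ y, p x y * Real.logb 2 (condX p n i x y)) := rfl
    _ = -(∑ i, ∑ x, ∑ y, p x y * Real.logb 2 (condX p n i x y)) := by
        rw [Finset.sum_neg_distrib]
    _ = -(∑ x, ∑ y, p x y * Real.logb 2 (pX p x)) := by rw [key]
    _ = HX p := rfl

end Telescope
section Bopt

variable {n : ℕ}

def bopt (p : (Fin n → α) → (Fin n → β) → ℝ) (d : ℕ) :
    Fin n → (Fin n → α) → (Fin n → β) → ℝ :=
  fun i x y => if 0 < pr p (dev i d x y) then condX p d i x y else (Fintype.card α : ℝ)⁻¹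

lemma sum_nev_update (p : (Fin n → α) → (Fin n → β) → ℝ) (i : Fin n) (d : ℕ)
    (x : Fin n → α) (y : Fin n → β) :
    ∑ a : α, pr p (nev i d (Function.update x i a) y) = pr p (dev i d x y) := by
  unfold pr
  rw [Finset.sum_comm]
  refine Finset.sum_congr rfl fun x' _ => ?_
  rw [Finset.sum_comm]
  refine Finset.sum_congr rfl fun y' _ => ?_
  by_cases hC : (∀ j, j < i → x' j = x j) ∧
      (∀ j : Fin n, (j : ℕ) + d ≤ (i : ℕ) → y' j = y j)
  · rw [if_pos (show dev i d x y x' y' from hC)]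
    rw [Finset.sum_eq_single (x' i)]
    · rw [if_pos]
      refine ⟨fun j hj => ?_, hC.2⟩
      rcases lt_or_eq_of_le hj with hlt | heq
      · rw [Function.update_of_ne (ne_of_lt hlt)]
        exact hC.1 j hlt
      · rw [heq, Function.update_self]
    · intro a _ hne
      rw [if_neg]
      rintro ⟨h1, -⟩
      have := h1 i le_rfl
      rw [Function.update_self] at this
      exact hne this.symm
    · intro h'
      exact absurd (Finset.mem_univ _) h'
  · rw [if_neg (show ¬ dev i d x y x' y' from hC)]
    apply Finset.sum_eq_zero
    intro a _
    rw [if_neg]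
    rintro ⟨h1, h2⟩
    apply hC
    constructor
    · intro j hj
      have := h1 j hj.le
      rwa [Function.update_of_ne (ne_of_lt hj)] at this
    · exact h2

lemma dev_update (p : (Fin n → α) → (Fin n → β) → ℝ) (i : Fin n) (d : ℕ)
    (x : Fin n → α) (y : Fin n → β) (a : α) :
    pr p (dev i d (Function.update x i a) y) = pr p (dev i d x y) :=
  dev_congr p (fun j hj => (Function.update_of_ne (ne_of_lt hj) _ _ : _))
    (fun _ _ => rfl)

lemma bopt_causal (p : (Fin n → α) → (Fin n → β) → ℝ) (hp : IsPmf p) (d : ℕ) :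
    IsCausalBet (bopt p d) := by
  refine ⟨?_, ?_, ?_⟩
  · intro i x y
    unfold bopt
    split
    · exact condX_nonneg p hp.1 d i x y
    · positivity
  · intro i x x' y y' hx hy
    have hy' : ∀ j : Fin n, (j : ℕ) + d ≤ (i : ℕ) → y j = y' j := fun j hj =>
      hy j (Fin.le_def.mpr (by omega))
    have h1 : pr p (dev i d x y) = pr p (dev i d x' y') :=
      dev_congr p (fun j hj => hx j hj.le) hy'
    have h2 : pr p (nev i d x y) = pr p (nev i d x' y') := nev_congr p hx hy'
    unfold bopt
    rw [condX_eq, condX_eq, h1, h2]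
  · intro i x y
    haveI : Nonempty α := alpha_nonempty p hp i
    have hD : ∀ a : α, pr p (dev i d (Function.update x i a) y) = pr p (dev i d x y) :=
      fun a => dev_update p i d x y a
    by_cases hd : 0 < pr p (dev i d x y)
    · have heach : ∀ a ∈ (Finset.univ : Finset α), bopt p d i (Function.update x i a) y
          = pr p (nev i d (Function.update x i a) y) / pr p (dev i d x y) := by
        intro a _
        unfold bopt
        rw [condX_eq, hD a, if_pos hd]
      rw [Finset.sum_congr rfl heach, ← Finset.sum_div, sum_nev_update p i d x y,
        div_self (ne_of_gt hd)]
    · have heach : ∀ a ∈ (Finset.univ : Finset α), bopt p d i (Function.update x i a) y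
          = (Fintype.card α : ℝ)⁻¹ := by
        intro a _
        unfold bopt
        rw [hD a, if_neg hd]
      rw [Finset.sum_congr rfl heach, Finset.sum_const, Finset.card_univ, nsmul_eq_mul,
        mul_inv_cancel₀]
      exact_mod_cast (Fintype.card_ne_zero : Fintype.card α ≠ 0)

lemma bopt_prod_pos (p : (Fin n → α) → (Fin n → β) → ℝ) (hp : IsPmf p) (d : ℕ) :
    ∀ x y, 0 < p x y → 0 < ∏ i, bopt p d i x y := by
  intro x y h
  refine Finset.prod_pos fun i _ => ?_
  unfold bopt
  rw [if_pos (lt_of_lt_of_le h (le_pr p hp.1 _ dev_self))]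
  exact condX_pos p hp.1 d i h

lemma bopt_growth (p : (Fin n → α) → (Fin n → β) → ℝ) (hp : IsPmf p)
    (o : Fin n → (Fin n → α) → ℝ) (ho : ∀ i x, 0 < o i x) (d : ℕ) :
    growthW p o (bopt p d) =
      Elogo p o + ∑ i, ∑ x, ∑ y, p x y * Real.logb 2 (condX p d i x y) := by
  rw [growth_decomp p hp.1 o ho _ (fun i x y => (bopt_causal p hp d).1 i x y)
    (bopt_prod_pos p hp d)]
  congr 1
  refine Finset.sum_congr rfl fun i _ => Finset.sum_congr rfl fun x _ =>
    Finset.sum_congr rfl fun y _ => ?_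
  rcases eq_or_lt_of_le (hp.1 x y) with h0 | h0
  · rw [← h0]; ring
  · have : bopt p d i x y = condX p d i x y := by
      unfold bopt
      rw [if_pos (lt_of_lt_of_le h0 (le_pr p hp.1 _ dev_self))]
    rw [this]

lemma bopt_yindep (p : (Fin n → α) → (Fin n → β) → ℝ) :
    ∀ (i : Fin n) x y y', bopt p n i x y = bopt p n i x y' := by
  intro i x y y'
  have h1 : pr p (dev i n x y) = pr p (dev i n x y') :=
    dev_congr p (fun j _ => rfl) (fun j hj => absurd hj vac_nd)
  have h2 : pr p (nev i n x y) = pr p (nev i n x y') :=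
    nev_congr p (fun j _ => rfl) (fun j hj => absurd hj vac_nd)
  unfold bopt
  rw [condX_eq, condX_eq, h1, h2]

end Bopt
section FinalLemmas

variable {n : ℕ}

lemma growth_le (p : (Fin n → α) → (Fin n → β) → ℝ) (hp : IsPmf p)
    (o : Fin n → (Fin n → α) → ℝ) (ho : ∀ i x, 0 < o i x) (d : ℕ)
    (b : Fin n → (Fin n → α) → (Fin n → β) → ℝ) (hb : IsCausalBet b)
    (hbc2 : ∀ (i : Fin n) x x' y y', (∀ j, j ≤ i → x j = x' j) →
      (∀ j : Fin n, (j : ℕ) + d ≤ (i : ℕ) → y j = y' j) → b i x y = b i x' y')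
    (hbp : ∀ x y, 0 < p x y → 0 < ∏ i, b i x y) :
    growthW p o b ≤
      Elogo p o + ∑ i, ∑ x, ∑ y, p x y * Real.logb 2 (condX p d i x y) := by
  rw [growth_decomp p hp.1 o ho b hb.1 hbp]
  have hstep : ∀ i : Fin n, (∑ x, ∑ y, p x y * Real.logb 2 (b i x y)) ≤
      ∑ x, ∑ y, p x y * Real.logb 2 (condX p d i x y) := by
    intro i
    refine step_gibbs p hp i d (b i) (hb.1 i) (hbc2 i) (hb.2.2 i) ?_
    intro x y h
    exact prod_pos_factor (fun i' => hb.1 i' x y) (hbp x y h) i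
  exact add_le_add (le_refl _) (Finset.sum_le_sum fun i _ => hstep i)

end FinalLemmas
/-- the increase in optimal growth due to causal side information in a
horse race equals the directed information:
`W*(X^n||Y^n) − W*(X^n) = I(Y^n → X^n) = H(X^n) − H(X^n||Y^n)`.
Here `W*(X^n||Y^n)` is the supremum of the growth over causal strategies using the
side information, and `W*(X^n)` over strategies ignoring it. -/
theorem increase_in_growth_rate {n : ℕ}
    (p : (Fin n → α) → (Fin n → β) → ℝ) (hp : IsPmf p)
    (o : Fin n → (Fin n → α) → ℝ) (ho : ∀ i x, 0 < o i x)
    (hoc : ∀ i x x', (∀ j, j ≤ i → x j = x' j) → o i x = o i x') :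
    sSup {w | ∃ b, IsCausalBet b ∧ (∀ x y, 0 < p x y → 0 < ∏ i, b i x y) ∧
        w = growthW p o b} -
      sSup {w | ∃ b, IsCausalBet b ∧ (∀ i x y y', b i x y = b i x y') ∧
        (∀ x y, 0 < p x y → 0 < ∏ i, b i x y) ∧ w = growthW p o b} =
    HX p - HccX p 0 := by
  set V1 := Elogo p o + ∑ i, ∑ x, ∑ y, p x y * Real.logb 2 (condX p 0 i x y) with hV1
  set V2 := Elogo p o + ∑ i, ∑ x, ∑ y, p x y * Real.logb 2 (condX p n i x y) with hV2
  set S1 := {w | ∃ b, IsCausalBet b ∧ (∀ x y, 0 < p x y → 0 < ∏ i, b i x y) ∧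
    w = growthW p o b} with hS1
  set S2 := {w | ∃ b, IsCausalBet b ∧ (∀ i x y y', b i x y = b i x y') ∧
    (∀ x y, 0 < p x y → 0 < ∏ i, b i x y) ∧ w = growthW p o b} with hS2
  have hub1 : ∀ w ∈ S1, w ≤ V1 := by
    rintro w ⟨b, hb, hbp, rfl⟩
    refine growth_le p hp o ho 0 b hb ?_ hbp
    intro i x x' y y' hx hy
    exact hb.2.1 i x x' y y' hx
      (fun j hj => hy j (by simpa using Fin.le_def.mp hj))
  have hmem1 : growthW p o (bopt p 0) ∈ S1 :=
    ⟨bopt p 0, bopt_causal p hp 0, bopt_prod_pos p hp 0, rfl⟩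
  have hval1 : growthW p o (bopt p 0) = V1 := bopt_growth p hp o ho 0
  have hsup1 : sSup S1 = V1 := by
    refine le_antisymm (csSup_le ⟨_, hmem1⟩ hub1) ?_
    rw [← hval1]
    exact le_csSup ⟨V1, hub1⟩ hmem1
  have hub2 : ∀ w ∈ S2, w ≤ V2 := by
    rintro w ⟨b, hb, hyind, hbp, rfl⟩
    refine growth_le p hp o ho n b hb ?_ hbp
    intro i x x' y y' hx hy
    calc b i x y = b i x' y := hb.2.1 i x x' y y hx (fun _ _ => rfl)
      _ = b i x' y' := hyind i x' y y'
  have hmem2 : growthW p o (bopt p n) ∈ S2 :=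
    ⟨bopt p n, bopt_causal p hp n, bopt_yindep p, bopt_prod_pos p hp n, rfl⟩
  have hval2 : growthW p o (bopt p n) = V2 := bopt_growth p hp o ho n
  have hsup2 : sSup S2 = V2 := by
    refine le_antisymm (csSup_le ⟨_, hmem2⟩ hub2) ?_
    rw [← hval2]
    exact le_csSup ⟨V2, hub2⟩ hmem2
  rw [hsup1, hsup2]
  have e1 : HccX p 0 = -∑ i, ∑ x, ∑ y, p x y * Real.logb 2 (condX p 0 i x y) := by
    unfold HccX HcondX
    rw [Finset.sum_neg_distrib]
  have e2 : HX p = -∑ i, ∑ x, ∑ y, p x y * Real.logb 2 (condX p n i x y) := by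
    rw [← sum_HcondX_n p hp]
    unfold HcondX
    rw [Finset.sum_neg_distrib]
  rw [hV1, hV2, e1, e2]
  ring
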